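/- Let n, h, k be integers with 1 ≤ k ≤ h and n ≡ h (mod 2). Then (n+1) times the total number of k-down steps, summed over all generalized Dyck paths from (0,0) to (n,h), equals Σ_{j=0}^{k−1} (h+2j+3)·C(n+1, (n−2j−h−2)/2), where a summand is 0 whenever (n−2j−h−2)/2 is negative. -/
import Mathlib


open Finset

attribute [local instance] Classical.propDecidable

/-- The height of the lattice path `p` (where `true` is a northeast step `(1,1)` and
`false` is a southeast step `(1,-1)`) after its first `i` steps. -/
def pathHeight {n : ℕ} (p : Fin n → Bool) (i : ℕ) : ℤ :=
  ∑ j ∈ Finset.univ.filter (fun j : Fin n => (j : ℕ) < i), (if p j then (1 : ℤ) else -1)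

/-- `p` is a generalized Dyck path from `(0,0)` to `(n,h)`: it ends at height `h`
and never goes below the x-axis. -/
def IsGDPath {n : ℕ} (h : ℤ) (p : Fin n → Bool) : Prop :=
  pathHeight p n = h ∧ ∀ i ≤ n, 0 ≤ pathHeight p i

/-- The set of generalized Dyck paths from `(0,0)` to `(n,h)`. -/
noncomputable def gdPaths (n : ℕ) (h : ℤ) : Finset (Fin n → Bool) :=
  Finset.univ.filter (IsGDPath h)

/-- The number of `k`-down steps of `p`, i.e. southeast steps from height `k` to `k-1`. -/
noncomputable def downSteps {n : ℕ} (k : ℤ) (p : Fin n → Bool) : ℕ :=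
  (Finset.univ.filter (fun i : Fin n => p i = false ∧ pathHeight p (i : ℕ) = k)).card

/-- Binomial coefficient on integers, `0` unless `0 ≤ b ≤ a`. -/
def binom (a b : ℤ) : ℤ :=
  if 0 ≤ b ∧ b ≤ a then (a.toNat.choose b.toNat : ℤ) else 0

/-! ### Auxiliary lemmas on `binom` -/

lemma binom_natCast (a b : ℕ) : binom (a : ℤ) (b : ℤ) = (a.choose b : ℤ) := by
  unfold binom
  by_cases hba : b ≤ a
  · rw [if_pos ⟨Int.natCast_nonneg b, by exact_mod_cast hba⟩]
    simp
  · rw [if_neg (by push_neg; intro _; exact_mod_cast Nat.lt_of_not_le hba),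
      Nat.choose_eq_zero_of_lt (Nat.lt_of_not_le hba)]
    simp

lemma binom_of_neg {a b : ℤ} (hb : b < 0) : binom a b = 0 := by
  unfold binom
  rw [if_neg]
  rintro ⟨h0, _⟩; omega

lemma binom_of_gt {a b : ℤ} (hb : a < b) : binom a b = 0 := by
  unfold binom
  rw [if_neg]
  rintro ⟨_, h1⟩; omega

lemma binom_zero {a : ℤ} (ha : 0 ≤ a) : binom a 0 = 1 := by
  unfold binom
  rw [if_pos ⟨le_rfl, ha⟩]
  simp

lemma binom_pascal (n : ℕ) (b : ℤ) :
    binom ((n : ℤ) + 1) b = binom (n : ℤ) b + binom (n : ℤ) (b - 1) := by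
  rcases lt_or_ge b 0 with hb | hb
  · rw [binom_of_neg hb, binom_of_neg hb, binom_of_neg (by omega)]; ring
  · obtain ⟨c, rfl⟩ : ∃ c : ℕ, b = (c : ℤ) := ⟨b.toNat, (Int.toNat_of_nonneg hb).symm⟩
    cases c with
    | zero =>
      simp only [Nat.cast_zero, zero_sub, binom_of_neg (show (-1 : ℤ) < 0 by norm_num)]
      rw [binom_zero (by positivity), binom_zero (by positivity)]
      ring
    | succ d =>
      rw [show ((n : ℤ) + 1) = ((n + 1 : ℕ) : ℤ) by push_cast; ring,
        show ((d + 1 : ℕ) : ℤ) - 1 = ((d : ℕ) : ℤ) by push_cast; ring,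
        binom_natCast, binom_natCast, binom_natCast, Nat.choose_succ_succ]
      push_cast; ring

lemma binom_symm_half (n : ℕ) (m : ℤ) (hnm : (n : ℤ) = 2 * m - 1) :
    binom (n : ℤ) m = binom (n : ℤ) (m - 1) := by
  have hm1 : 1 ≤ m := by omega
  obtain ⟨t, rfl⟩ : ∃ t : ℕ, m = (t : ℤ) := ⟨m.toNat, (Int.toNat_of_nonneg (by omega)).symm⟩
  have ht : 1 ≤ t := by exact_mod_cast hm1
  rw [show ((t : ℤ) - 1) = ((t - 1 : ℕ) : ℤ) by omega, binom_natCast, binom_natCast]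
  have hn : n = 2 * t - 1 := by omega
  subst hn
  norm_cast
  have := Nat.choose_symm (n := 2 * t - 1) (k := t) (by omega)
  rw [show 2 * t - 1 - t = t - 1 by omega] at this
  omega

/-- Key identity: `(n+1-2b) C(n+1,b) = (n+1)(C(n,b) - C(n,b-1))`. -/
lemma binom_key (n : ℕ) (b : ℤ) :
    ((n : ℤ) + 1 - 2 * b) * binom ((n : ℤ) + 1) b
      = ((n : ℤ) + 1) * (binom (n : ℤ) b - binom (n : ℤ) (b - 1)) := by
  rcases lt_or_ge b 0 with hb | hb
  · rw [binom_of_neg hb, binom_of_neg hb, binom_of_neg (by omega)]; ring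
  · obtain ⟨c, rfl⟩ : ∃ c : ℕ, b = (c : ℤ) := ⟨b.toNat, (Int.toNat_of_nonneg hb).symm⟩
    cases c with
    | zero =>
      simp only [Nat.cast_zero, zero_sub, binom_of_neg (show (-1 : ℤ) < 0 by norm_num)]
      rw [binom_zero (by positivity), binom_zero (by positivity)]
      ring
    | succ d =>
      rw [show ((n : ℤ) + 1) = ((n + 1 : ℕ) : ℤ) by push_cast; ring,
        show ((d + 1 : ℕ) : ℤ) - 1 = ((d : ℕ) : ℤ) by push_cast; ring,
        binom_natCast, binom_natCast, binom_natCast]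
      have h1 : ((n + 1).choose (d + 1) : ℤ) = (n.choose d : ℤ) + (n.choose (d + 1) : ℤ) := by
        exact_mod_cast congrArg (Nat.cast : ℕ → ℤ) (Nat.choose_succ_succ n d)
      have h2 : ((n : ℤ) + 1) * (n.choose d : ℤ) = ((n + 1).choose (d + 1) : ℤ) * ((d : ℤ) + 1) := by
        exact_mod_cast congrArg (Nat.cast : ℕ → ℤ) (Nat.add_one_mul_choose_eq n d)
      push_cast at h1 h2 ⊢
      linear_combination ((n : ℤ) + 1) * h1 + 2 * h2

/-! ### Path lemmas -/

/-- The `j`-th step of `p`, as an integer (`0` out of range). -/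
noncomputable def stepF {n : ℕ} (p : Fin n → Bool) (j : ℕ) : ℤ :=
  if hj : j < n then (if p ⟨j, hj⟩ then (1 : ℤ) else -1) else 0

lemma pathHeight_eq {n : ℕ} (p : Fin n → Bool) {i : ℕ} (hi : i ≤ n) :
    pathHeight p i = ∑ j ∈ Finset.range i, stepF p j := by
  unfold pathHeight
  rw [Finset.sum_filter]
  have hcongr : ∀ j : Fin n,
      (if (j : ℕ) < i then (if p j then (1 : ℤ) else -1) else 0)
        = (fun m => if m < i then stepF p m else 0) (j : ℕ) := by
    intro j
    simp only [stepF, j.isLt, dif_pos, Fin.eta]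
  rw [Finset.sum_congr rfl (fun j _ => hcongr j),
    Fin.sum_univ_eq_sum_range (fun m => if m < i then stepF p m else 0) n, ← Finset.sum_filter]
  apply Finset.sum_congr
  · ext j
    simp only [Finset.mem_filter, Finset.mem_range]
    omega
  · intro _ _; rfl

lemma stepF_snoc {n : ℕ} (q : Fin n → Bool) (b : Bool) {j : ℕ} (hj : j < n) :
    stepF (Fin.snoc q b) j = stepF q j := by
  unfold stepF
  rw [dif_pos (hj.trans (Nat.lt_succ_self n)), dif_pos hj]
  have h1 : (⟨j, hj.trans (Nat.lt_succ_self n)⟩ : Fin (n + 1)) = Fin.castSucc ⟨j, hj⟩ := rfl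
  rw [h1, Fin.snoc_castSucc]

lemma stepF_snoc_last {n : ℕ} (q : Fin n → Bool) (b : Bool) :
    stepF (Fin.snoc q b) n = (if b then (1 : ℤ) else -1) := by
  unfold stepF
  rw [dif_pos (Nat.lt_succ_self n)]
  have h1 : (⟨n, Nat.lt_succ_self n⟩ : Fin (n + 1)) = Fin.last n := rfl
  rw [h1, Fin.snoc_last]

lemma pathHeight_snoc {n : ℕ} (q : Fin n → Bool) (b : Bool) {i : ℕ} (hi : i ≤ n) :
    pathHeight (Fin.snoc q b) i = pathHeight q i := by
  rw [pathHeight_eq _ (hi.trans (Nat.le_succ n)), pathHeight_eq _ hi]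
  refine Finset.sum_congr rfl fun j hj => ?_
  exact stepF_snoc q b (lt_of_lt_of_le (Finset.mem_range.1 hj) hi)

lemma pathHeight_snoc_top {n : ℕ} (q : Fin n → Bool) (b : Bool) :
    pathHeight (Fin.snoc q b) (n + 1) = pathHeight q n + (if b then (1 : ℤ) else -1) := by
  rw [pathHeight_eq _ (le_refl (n + 1)), Finset.sum_range_succ, stepF_snoc_last,
    pathHeight_eq _ (le_refl n)]
  congr 1
  exact Finset.sum_congr rfl fun j hj => stepF_snoc q b (Finset.mem_range.1 hj)

lemma isGDPath_snoc_iff {n : ℕ} {h : ℤ} (h0 : 0 ≤ h) (q : Fin n → Bool) (b : Bool) :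
    IsGDPath h (Fin.snoc q b) ↔ IsGDPath (h - (if b then (1 : ℤ) else -1)) q := by
  constructor
  · rintro ⟨hend, hnn⟩
    refine ⟨?_, fun i hi => ?_⟩
    · have := pathHeight_snoc_top q b
      rw [hend] at this; linarith
    · rw [← pathHeight_snoc q b hi]
      exact hnn i (hi.trans (Nat.le_succ n))
  · rintro ⟨hend, hnn⟩
    refine ⟨?_, fun i hi => ?_⟩
    · rw [pathHeight_snoc_top, hend]; ring
    · by_cases hi' : i ≤ n
      · rw [pathHeight_snoc q b hi']
        exact hnn i hi'
      · have hieq : i = n + 1 := by omega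
        subst hieq
        have : pathHeight (Fin.snoc q b) (n + 1) = h := by
          rw [pathHeight_snoc_top, hend]; ring
        rw [this]; exact h0

lemma downSteps_snoc {n : ℕ} (q : Fin n → Bool) (b : Bool) (k : ℤ) :
    downSteps k (Fin.snoc q b)
      = downSteps k q + (if b = false ∧ pathHeight q n = k then 1 else 0) := by
  unfold downSteps
  rw [Finset.card_filter, Finset.card_filter, Fin.sum_univ_castSucc]
  congr 1
  · refine Finset.sum_congr rfl fun i _ => ?_
    have h1 : (Fin.snoc q b : Fin (n + 1) → Bool) (Fin.castSucc i) = q i := by simp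
    have h2 : pathHeight (Fin.snoc q b) ((Fin.castSucc i : Fin (n + 1)) : ℕ)
        = pathHeight q (i : ℕ) := by
      have : ((Fin.castSucc i : Fin (n + 1)) : ℕ) = (i : ℕ) := rfl
      rw [this, pathHeight_snoc q b (le_of_lt i.isLt)]
    rw [h1, h2]
  · have h1 : (Fin.snoc q b : Fin (n + 1) → Bool) (Fin.last n) = b := by simp
    have h2 : pathHeight (Fin.snoc q b) ((Fin.last n : Fin (n + 1)) : ℕ) = pathHeight q n := by
      have : ((Fin.last n : Fin (n + 1)) : ℕ) = n := rfl
      rw [this, pathHeight_snoc q b (le_refl n)]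
    rw [h1, h2]

lemma mem_gdPaths {n : ℕ} {h : ℤ} {p : Fin n → Bool} : p ∈ gdPaths n h ↔ IsGDPath h p := by
  simp [gdPaths]

lemma gdPaths_of_neg {n : ℕ} {h : ℤ} (hh : h < 0) : gdPaths n h = ∅ := by
  rw [Finset.eq_empty_iff_forall_notMem]
  intro p hp
  obtain ⟨hend, hnn⟩ := mem_gdPaths.1 hp
  have := hnn n le_rfl
  rw [hend] at this
  omega

/-- Splitting a sum over generalized Dyck paths of length `n+1` by the last step. -/
lemma sum_gdPaths_succ {M : Type*} [AddCommMonoid M] {n : ℕ} {h : ℤ} (h0 : 0 ≤ h)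
    (f : (Fin (n + 1) → Bool) → M) :
    ∑ p ∈ gdPaths (n + 1) h, f p =
      (∑ q ∈ gdPaths n (h - 1), f (Fin.snoc q true)) +
      (∑ q ∈ gdPaths n (h + 1), f (Fin.snoc q false)) := by
  classical
  rw [gdPaths, Finset.sum_filter,
    ← Equiv.sum_comp (Fin.snocEquiv (fun _ => Bool)) (fun p => if IsGDPath h p then f p else 0),
    Fintype.sum_prod_type]
  have step : ∀ x : Bool,
      (∑ q : Fin n → Bool, if IsGDPath h ((Fin.snocEquiv (fun _ => Bool)) (x, q))
          then f ((Fin.snocEquiv (fun _ => Bool)) (x, q)) else 0)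
        = ∑ q ∈ gdPaths n (h - (if x then (1 : ℤ) else -1)), f (Fin.snoc q x) := by
    intro x
    rw [gdPaths, Finset.sum_filter]
    refine Finset.sum_congr rfl fun q _ => ?_
    have he : (Fin.snocEquiv (fun _ => Bool)) (x, q) = Fin.snoc q x := rfl
    rw [he]
    exact if_congr (isGDPath_snoc_iff h0 q x) rfl rfl
  rw [Fintype.sum_bool]
  rw [step true, step false]
  norm_num

/-! ### The two counting quantities and their recurrences -/

noncomputable def Ncnt (n : ℕ) (h : ℤ) : ℕ := (gdPaths n h).card

noncomputable def Tcnt (n : ℕ) (h k : ℤ) : ℕ := ∑ p ∈ gdPaths n h, downSteps k p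

lemma Ncnt_of_neg {n : ℕ} {h : ℤ} (hh : h < 0) : Ncnt n h = 0 := by
  rw [Ncnt, gdPaths_of_neg hh, Finset.card_empty]

lemma Tcnt_of_neg {n : ℕ} {h k : ℤ} (hh : h < 0) : Tcnt n h k = 0 := by
  rw [Tcnt, gdPaths_of_neg hh, Finset.sum_empty]

lemma Ncnt_succ (n : ℕ) (h : ℤ) (h0 : 0 ≤ h) :
    Ncnt (n + 1) h = Ncnt n (h - 1) + Ncnt n (h + 1) := by
  unfold Ncnt
  rw [Finset.card_eq_sum_ones, sum_gdPaths_succ h0 (fun _ => 1),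
    ← Finset.card_eq_sum_ones, ← Finset.card_eq_sum_ones]

lemma Tcnt_succ (n : ℕ) (h k : ℤ) (h0 : 0 ≤ h) :
    Tcnt (n + 1) h k
      = Tcnt n (h - 1) k + (Tcnt n (h + 1) k + (if h + 1 = k then Ncnt n (h + 1) else 0)) := by
  unfold Tcnt
  rw [sum_gdPaths_succ h0 (downSteps k)]
  congr 1
  · refine Finset.sum_congr rfl fun q _ => ?_
    rw [downSteps_snoc]
    simp
  · have e2 : ∀ q ∈ gdPaths n (h + 1),
        downSteps k (Fin.snoc q false) = downSteps k q + (if h + 1 = k then 1 else 0) := by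
      intro q hq
      rw [downSteps_snoc]
      have hend : pathHeight q n = h + 1 := (mem_gdPaths.1 hq).1
      simp [hend]
    rw [Finset.sum_congr rfl e2, Finset.sum_add_distrib, Finset.sum_const, smul_eq_mul,
      mul_ite, mul_one, mul_zero, Ncnt]

lemma pathHeight_nil (p : Fin 0 → Bool) (i : ℕ) : pathHeight p i = 0 := by
  simp [pathHeight]

lemma Ncnt_zero (h : ℤ) : Ncnt 0 h = if h = 0 then 1 else 0 := by
  unfold Ncnt gdPaths
  by_cases hh : h = 0
  · subst hh
    rw [if_pos rfl, Finset.filter_true_of_mem]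
    · simp
    · intro p _
      exact ⟨pathHeight_nil p 0, fun i _ => le_of_eq (pathHeight_nil p i).symm⟩
  · rw [if_neg hh, Finset.card_eq_zero, Finset.eq_empty_iff_forall_notMem]
    intro p hp
    have := (Finset.mem_filter.1 hp).2.1
    rw [pathHeight_nil] at this
    exact hh this.symm

lemma Tcnt_zero (h k : ℤ) : Tcnt 0 h k = 0 := by
  unfold Tcnt
  refine Finset.sum_eq_zero fun p _ => ?_
  unfold downSteps
  rw [Finset.card_eq_zero, Finset.eq_empty_iff_forall_notMem]
  intro i _
  exact absurd i.isLt (by omega)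

/-! ### Closed forms -/

lemma Ncnt_formula : ∀ (n : ℕ) (h m : ℤ), 0 ≤ h → (n : ℤ) = 2 * m + h →
    (Ncnt n h : ℤ) = binom n m - binom n (m - 1) := by
  intro n
  induction n with
  | zero =>
    intro h m h0 hm
    rw [Ncnt_zero]
    by_cases hh : h = 0
    · subst hh
      have hm0 : m = 0 := by omega
      subst hm0
      rw [if_pos rfl, binom_of_neg (by norm_num : (0:ℤ) - 1 < 0)]
      simp [binom]
    · rw [if_neg hh, binom_of_neg (by omega : m < 0), binom_of_neg (by omega : m - 1 < 0)]
      simp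
  | succ n ih =>
    intro h m h0 hm
    rw [Ncnt_succ n h h0]
    push_cast
    rw [binom_pascal n m, binom_pascal n (m - 1)]
    have hm' : (n : ℤ) = 2 * m + h - 1 := by push_cast at hm; linarith
    by_cases hh : h = 0
    · subst hh
      rw [Ncnt_of_neg (show (0:ℤ) - 1 < 0 by norm_num)]
      have ih1 := ih (0 + 1) (m - 1) (by norm_num) (by omega)
      have hsymm := binom_symm_half n m (by omega)
      ring_nf at ih1 hsymm ⊢
      linarith
    · have hh1 : 1 ≤ h := by omega
      have ih1 := ih (h - 1) m (by omega) (by omega)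
      have ih2 := ih (h + 1) (m - 1) (by omega) (by omega)
      ring_nf at ih1 ih2 ⊢
      linarith

lemma Tcnt_formula : ∀ (n : ℕ) (h k a : ℤ), 0 ≤ h → 1 ≤ k → (n : ℤ) = 2 * a + h + 2 →
    (Tcnt n h k : ℤ) = binom n (a - max (k - 1 - h) 0) - binom n (a - k) := by
  intro n
  induction n with
  | zero =>
    intro h k a h0 hk hna
    rw [Tcnt_zero]
    have ha : a ≤ -1 := by omega
    rw [binom_of_neg (by omega : a - max (k - 1 - h) 0 < 0), binom_of_neg (by omega : a - k < 0)]
    simp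
  | succ n ih =>
    intro h k a h0 hk hna
    have hna' : (n : ℤ) = 2 * a + h + 1 := by push_cast at hna; linarith
    rw [Tcnt_succ n h k h0]
    push_cast
    rw [binom_pascal n, binom_pascal n]
    by_cases hh : h = 0
    · subst hh
      rw [Tcnt_of_neg (show (0:ℤ) - 1 < 0 by norm_num)]
      have ihT := ih (0 + 1) k (a - 1) (by norm_num) hk (by omega)
      by_cases hk1 : k = 1
      · subst hk1
        rw [if_pos (show (0:ℤ) + 1 = 1 by norm_num)]
        have ihN := Ncnt_formula n (0 + 1) a (by norm_num) (by omega)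
        rw [show max ((1:ℤ) - 1 - (0 + 1)) 0 = 0 by rw [max_eq_right (by norm_num)]] at ihT
        rw [show max ((1:ℤ) - 1 - 0) 0 = 0 by rw [max_eq_right (by norm_num)]]
        ring_nf at ihT ihN ⊢
        linarith
      · rw [if_neg (show ¬ (0:ℤ) + 1 = k by omega)]
        rw [show max (k - 1 - ((0:ℤ) + 1)) 0 = k - 2 by rw [max_eq_left (by omega)]; try omega] at ihT
        rw [show max (k - 1 - (0:ℤ)) 0 = k - 1 by rw [max_eq_left (by omega)]; try omega]
        ring_nf at ihT ⊢
        linarith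
    · have hh1 : 1 ≤ h := by omega
      have ihT1 := ih (h - 1) k a (by omega) hk (by omega)
      have ihT2 := ih (h + 1) k (a - 1) (by omega) hk (by omega)
      rcases lt_trichotomy h (k - 1) with hcase | hcase | hcase
      · -- 1 ≤ h ≤ k - 2
        rw [show max (k - 1 - (h - 1)) 0 = k - h by rw [max_eq_left (by omega)]; try omega] at ihT1
        rw [show max (k - 1 - (h + 1)) 0 = k - 2 - h by rw [max_eq_left (by omega)]; try omega] at ihT2
        rw [show max (k - 1 - h) 0 = k - 1 - h by rw [max_eq_left (by omega)]; try omega]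
        rw [if_neg (show ¬ h + 1 = k by omega)]
        ring_nf at ihT1 ihT2 ⊢
        linarith
      · -- h = k - 1
        have ihN := Ncnt_formula n (h + 1) a (by omega) (by omega)
        rw [show max (k - 1 - (h - 1)) 0 = 1 by rw [max_eq_left (by omega)]; try omega] at ihT1
        rw [show max (k - 1 - (h + 1)) 0 = 0 by rw [max_eq_right (by omega)]] at ihT2
        rw [show max (k - 1 - h) 0 = 0 by rw [max_eq_right (by omega)]]
        rw [if_pos (show h + 1 = k by omega)]
        ring_nf at ihT1 ihT2 ihN ⊢
        linarith
      · -- h ≥ k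
        rw [show max (k - 1 - (h - 1)) 0 = 0 by rw [max_eq_right (by omega)]] at ihT1
        rw [show max (k - 1 - (h + 1)) 0 = 0 by rw [max_eq_right (by omega)]] at ihT2
        rw [show max (k - 1 - h) 0 = 0 by rw [max_eq_right (by omega)]]
        rw [if_neg (show ¬ h + 1 = k by omega)]
        ring_nf at ihT1 ihT2 ⊢
        linarith

/-! ### Telescoping identity -/

lemma telescoping (n : ℕ) (h a : ℤ) (hna : (n : ℤ) = 2 * a + h + 2) :
    ∀ k : ℕ, ∑ j ∈ Finset.range k, (h + 2 * (j : ℤ) + 3) * binom ((n : ℤ) + 1) (a - (j : ℤ))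
      = ((n : ℤ) + 1) * (binom (n : ℤ) a - binom (n : ℤ) (a - (k : ℤ))) := by
  intro k
  induction k with
  | zero => simp
  | succ k ih =>
    rw [Finset.sum_range_succ, ih]
    have hkey := binom_key n (a - (k : ℤ))
    have harg : (h + 2 * (k : ℤ) + 3) = ((n : ℤ) + 1 - 2 * (a - (k : ℤ))) := by linarith
    rw [harg, hkey]
    push_cast
    ring_nf

/-! ### Main theorem -/

/-- For 1 ≤ k ≤ h, (n+1) times the total number of k-down steps over all generalized Dyck
paths from (0,0) to (n,h) equals Σ_{j=0}^{k−1} (h+2j+3)·C(n+1, (n−2j−h−2)/2). -/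
theorem stmt13 (n h k : ℕ) (hk : 1 ≤ k) (hkh : k ≤ h) (hmod : n % 2 = h % 2) :
    ((n : ℤ) + 1) * (∑ p ∈ gdPaths n (h : ℤ), downSteps (k : ℤ) p : ℕ) =
      ∑ j ∈ Finset.range k,
        ((h : ℤ) + 2 * j + 3) * binom ((n : ℤ) + 1) (((n : ℤ) - 2 * j - h - 2) / 2) := by
  obtain ⟨a, ha⟩ : ∃ a : ℤ, (n : ℤ) - (h : ℤ) - 2 = 2 * a := by
    have : (2 : ℤ) ∣ ((n : ℤ) - (h : ℤ) - 2) := by omega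
    exact ⟨((n : ℤ) - (h : ℤ) - 2) / 2, (Int.mul_ediv_cancel' this).symm⟩
  have hna : (n : ℤ) = 2 * a + (h : ℤ) + 2 := by linarith
  have hT : (Tcnt n (h : ℤ) (k : ℤ) : ℤ)
      = binom (n : ℤ) a - binom (n : ℤ) (a - (k : ℤ)) := by
    have := Tcnt_formula n (h : ℤ) (k : ℤ) a (by positivity) (by exact_mod_cast hk) hna
    rw [show max ((k : ℤ) - 1 - (h : ℤ)) 0 = 0 by
      have : (k : ℤ) ≤ (h : ℤ) := by exact_mod_cast hkh
      omega] at this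
    simpa using this
  have hidx : ∀ j ∈ Finset.range k,
      ((h : ℤ) + 2 * j + 3) * binom ((n : ℤ) + 1) (((n : ℤ) - 2 * j - h - 2) / 2)
        = ((h : ℤ) + 2 * (j : ℤ) + 3) * binom ((n : ℤ) + 1) (a - (j : ℤ)) := by
    intro j _
    congr 2
    rw [show (n : ℤ) - 2 * j - h - 2 = 2 * (a - (j : ℤ)) by linarith]
    exact Int.mul_ediv_cancel_left _ two_ne_zero
  rw [Finset.sum_congr rfl hidx, telescoping n (h : ℤ) a hna k]
  have hTdef : (∑ p ∈ gdPaths n (h : ℤ), downSteps (k : ℤ) p : ℕ) = Tcnt n (h : ℤ) (k : ℤ) := rfl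
  rw [hTdef, hT]
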